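/- Let F̂ : K × K → 𝔸 be a normalized 2-cocycle and let ε : K³ → ℂˣ be a normalized cochain with δ_K ε = F̂ ∧ F. Then the function ω : G³ → ℂˣ defined by ω((a₁,k₁),(a₂,k₂),(a₃,k₃)) := F̂(k₁,k₂)(a₃)·ε(k₁,k₂,k₃) is a normalized 3-cocycle on G = A ⋊_F K with values in ℂˣ (trivial action): for all g₁,g₂,g₃,g₄ ∈ G, ω(g₂,g₃,g₄)·ω(g₁g₂,g₃,g₄)⁻¹·ω(g₁,g₂g₃,g₄)·ω(g₁,g₂,g₃g₄)⁻¹·ω(g₁,g₂,g₃) = 1. -/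

import Mathlib

open scoped BigOperators

section Defs

variable {A K : Type*} [CommGroup A] [Group K] [MulDistribMulAction K A]

/-- The product of the twisted (semidirect) product `G = A ⋊_F K`:
`(a₁,k₁)·(a₂,k₂) = (a₁ · ᵏ¹a₂ · F(k₁,k₂), k₁k₂)`. -/
def sdMul (F : K → K → A) (g₁ g₂ : A × K) : A × K :=
  (g₁.1 * g₁.2 • g₂.1 * F g₁.2 g₂.2, g₁.2 * g₂.2)

/-- The right action of `G = A ⋊_F K` on `K`:  `x ◁ (a,k) = x * k`. -/
def sdAct (x : K) (g : A × K) : K := x * g.2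

/-- `κ : K × G → A`, `κ_{x,(a,k)} = ˣa · F(x,k)`. -/
def kap (F : K → K → A) (x : K) (g : A × K) : A := x • g.1 * F x g.2

/-- Underlying type of the group of cochains `C^q(G, Map(K,ℂˣ))`. -/
abbrev Cq (A K : Type*) (q : ℕ) := K → (Fin q → A × K) → ℂˣ

/-- Normalization condition for cochains in `C^q(G, Map(K,ℂˣ))`:
`f(x; g₁,…,g_q) = 1` whenever some `gᵢ = 1`. -/
def NormG {q : ℕ} (f : Cq A K q) : Prop :=
  ∀ x g, (∃ i, g i = ((1 : A), (1 : K))) → f x g = 1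

/-- The differential `δ_G : C^q(G, Map(K,ℂˣ)) → C^{q+1}(G, Map(K,ℂˣ))`. -/
def deltaG (F : K → K → A) {q : ℕ} (f : Cq A K q) : Cq A K (q + 1) := fun x g =>
  f (sdAct x (g 0)) (Fin.tail g) *
    ∏ i : Fin (q + 1), f x (Fin.contractNth i (sdMul F) g) ^ ((-1 : ℤ) ^ ((i : ℕ) + 1))

/-- Underlying type of the group of cochains `C^q(A, ℂˣ)`. -/
abbrev CqA (A : Type*) (q : ℕ) := (Fin q → A) → ℂˣ

/-- Normalization condition for cochains in `C^q(A, ℂˣ)`. -/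
def NormA {q : ℕ} (α : CqA A q) : Prop := ∀ a, (∃ i, a i = 1) → α a = 1

/-- The differential `δ_A` on `C^*(A, ℂˣ)` (trivial `A`-action on `ℂˣ`). -/
def deltaA {q : ℕ} (α : CqA A q) : CqA A (q + 1) := fun a =>
  α (Fin.tail a) *
    ∏ i : Fin (q + 1), α (Fin.contractNth i (· * ·) a) ^ ((-1 : ℤ) ^ ((i : ℕ) + 1))

/-- The restriction map `ψ : C^q(G, Map(K,ℂˣ)) → C^q(A, ℂˣ)`,
`ψ(f)(a₁,…,a_q) = f(1; (a₁,1),…,(a_q,1))`. -/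
def psiA {q : ℕ} (f : Cq A K q) : CqA A q := fun a => f 1 fun i => (a i, 1)

/-- The map `φ : C^q(A, ℂˣ) → C^q(G, Map(K,ℂˣ))`,
`φ(α)(x; g₁,…,g_q) = α(κ_{x,g₁}, κ_{x◁g₁,g₂}, …, κ_{x◁g₁⋯g_{q-1},g_q})`. -/
def phiA (F : K → K → A) {q : ℕ} (α : CqA A q) : Cq A K q := fun x g =>
  α fun i => kap F (x * ((List.ofFn fun j => (g j).2).take (i : ℕ)).prod) (g i)

/-- The right `K`-action `f ◁ k` on `C^q(G, Map(K,ℂˣ))`: `(f ◁ k)(x; g) = f(kx; g)`. -/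
def rAct {q : ℕ} (f : Cq A K q) (k : K) : Cq A K q := fun x g => f (k * x) g

/-- Underlying type of `C^p(K, C^q(G, Map(K,ℂˣ)))`. -/
abbrev Cpq (A K : Type*) (p q : ℕ) := (Fin p → K) → Cq A K q

/-- Normalization in the `K`-variables. -/
def NormK {p q : ℕ} (h : Cpq A K p q) : Prop := ∀ k, (∃ i, k i = 1) → h k = 1

/-- The differential `δ_K : C^p(K, C^q(G,Map(K,ℂˣ))) → C^{p+1}(K, C^q(G,Map(K,ℂˣ)))`. -/
def deltaK {p q : ℕ} (h : Cpq A K p q) : Cpq A K (p + 1) q := fun k =>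
  h (Fin.tail k) *
    (∏ i : Fin p, h (Fin.contractNth i.castSucc (· * ·) k) ^ ((-1 : ℤ) ^ ((i : ℕ) + 1))) *
    rAct (h (Fin.init k)) (k (Fin.last p)) ^ ((-1 : ℤ) ^ (p + 1))

end Defs

/-- `ω((a₁,x₁),(a₂,x₂),(a₃,x₃)) = F̂(x₁,x₂)(a₃)·ε(x₁,x₂,x₃)`. -/
def omegaC {A K : Type*} [CommGroup A] (Fh : K → K → A →* ℂˣ) (ε : K → K → K → ℂˣ)
    (g₁ g₂ g₃ : A × K) : ℂˣ :=
  Fh g₁.2 g₂.2 g₃.1 * ε g₁.2 g₂.2 g₃.2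


private lemma aux_statement11 (A2 A12 A1 B C D E2 E12 E1 E34 E3 : ℂˣ)
    (key : A2 * A1 = A12 * C)
    (keyε : E2 * E12⁻¹ * E1 * E34⁻¹ * E3 = D) :
    A2 * E2 * (A12 * E12)⁻¹ * (A1 * E1) * (B * C * D * E34)⁻¹ * (B * E3) = 1 := by
  have key' : (A2 : ℂ) * A1 = A12 * C := by exact_mod_cast key
  have keyε' := congrArg Units.val keyε
  push_cast at keyε'
  rw [Units.ext_iff]
  push_cast
  field_simp at keyε' ⊢
  linear_combination (↑E2 * ↑E1 * ↑E3 : ℂ) * key' + (↑A12 * ↑C : ℂ) * keyε'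

/-- `ω((a₁,k₁),(a₂,k₂),(a₃,k₃)) = F̂(k₁,k₂)(a₃)·ε(k₁,k₂,k₃)` is a
normalized 3-cocycle on `G = A ⋊_F K` with values in `ℂˣ` (trivial action). -/
theorem statement11 {A K : Type*} [CommGroup A] [Group K] [Finite A] [Finite K]
    [MulDistribMulAction K A]
    (F : K → K → A)
    (hFn : ∀ k : K, F 1 k = 1 ∧ F k 1 = 1)
    (hF : ∀ k₁ k₂ k₃ : K, k₁ • F k₂ k₃ * F k₁ (k₂ * k₃) = F (k₁ * k₂) k₃ * F k₁ k₂)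
    (Fh : K → K → A →* ℂˣ)
    (hFhn : ∀ k : K, Fh 1 k = 1 ∧ Fh k 1 = 1)
    (hFh : ∀ (k₁ k₂ k₃ : K) (a : A),
      Fh k₂ k₃ a * Fh k₁ (k₂ * k₃) a = Fh (k₁ * k₂) k₃ a * Fh k₁ k₂ (k₃ • a))
    (ε : K → K → K → ℂˣ)
    (hεn : ∀ k₁ k₂ k₃ : K, k₁ = 1 ∨ k₂ = 1 ∨ k₃ = 1 → ε k₁ k₂ k₃ = 1)
    (hε : ∀ k₁ k₂ k₃ k₄ : K,
      ε k₂ k₃ k₄ * (ε (k₁ * k₂) k₃ k₄)⁻¹ * ε k₁ (k₂ * k₃) k₄ * (ε k₁ k₂ (k₃ * k₄))⁻¹ *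
        ε k₁ k₂ k₃ = Fh k₁ k₂ (F k₃ k₄))
 :
    (∀ g₁ g₂ g₃ : A × K,
      (g₁ = ((1 : A), (1 : K)) ∨ g₂ = ((1 : A), (1 : K)) ∨ g₃ = ((1 : A), (1 : K))) →
        omegaC Fh ε g₁ g₂ g₃ = 1) ∧
    (∀ g₁ g₂ g₃ g₄ : A × K,
      omegaC Fh ε g₂ g₃ g₄ * (omegaC Fh ε (sdMul F g₁ g₂) g₃ g₄)⁻¹ *
        omegaC Fh ε g₁ (sdMul F g₂ g₃) g₄ * (omegaC Fh ε g₁ g₂ (sdMul F g₃ g₄))⁻¹ *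
        omegaC Fh ε g₁ g₂ g₃ = 1) := by
  constructor
  · rintro g₁ g₂ g₃ (rfl | rfl | rfl) <;>
      simp [omegaC, (hFhn _).1, (hFhn _).2, hεn]
  · rintro ⟨a₁, x₁⟩ ⟨a₂, x₂⟩ ⟨a₃, x₃⟩ ⟨a₄, x₄⟩
    simp only [omegaC, sdMul, map_mul]
    exact aux_statement11 _ _ _ _ _ _ _ _ _ _ _ (hFh x₁ x₂ x₃ a₄) (hε x₁ x₂ x₃ x₄)
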